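/- arXiv:1705.06352 — 3 statements merged into one kernel-verified Lean document; each statement's English description precedes it below -/
import Mathlib

section
/- For every dimension d ≥ 8, the constant b = 1 + d/2 − 7d(d−1)/E(d) satisfies b > 1, where E(d) = √((46d² − 291d − 49)(d−1)) + 7(d−1). -/
theorem stmt_1 (d : ℝ) (hd : 8 ≤ d) :
    1 < 1 + d/2 - 7*d*(d-1) /
      (Real.sqrt ((46*d^2 - 291*d - 49) * (d - 1)) + 7*(d - 1)) := by
  set s := Real.sqrt ((46*d^2 - 291*d - 49) * (d - 1)) with hs
  have hs7 : 7*(d-1) < s := by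
    rw [hs]
    have h : (7*(d-1))^2 < (46*d^2 - 291*d - 49) * (d - 1) := by nlinarith
    nlinarith [Real.sq_sqrt (by nlinarith : (0:ℝ) ≤ (46*d^2 - 291*d - 49) * (d - 1)),
      Real.sqrt_nonneg ((46*d^2 - 291*d - 49) * (d - 1))]
  have hE : 0 < s + 7*(d-1) := by nlinarith
  have : 7*d*(d-1) / (s + 7*(d-1)) < d/2 := by
    rw [div_lt_iff₀ hE]
    nlinarith
  linarith
end

section
/- For d = 9, the function φ₀(ρ) = 3ρ/√(2(155 − 74ρ²)) satisfies the self-similar wave map ODE (1−ρ²)φ₀''(ρ) + (8/ρ − 2ρ)φ₀'(ρ) − 8(φ₀(ρ) + 14φ₀(ρ)³ − 111φ₀(ρ)⁵)/ρ² = 0 for all ρ ∈ (0,1). -/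
open Real

private lemma inner_deriv (x : ℝ) :
    HasDerivAt (fun ρ : ℝ => 2 * (155 - 74 * ρ^2)) (-296 * x) x := by
  have h := (((hasDerivAt_pow 2 x).const_mul 74).const_sub 155).const_mul 2
  refine h.congr_deriv (Eq.symm ?_)
  norm_num
  ring

private lemma sqrt_deriv (x : ℝ) (hx : 0 < 2 * (155 - 74 * x^2)) :
    HasDerivAt (fun ρ : ℝ => Real.sqrt (2 * (155 - 74 * ρ^2)))
      (-148 * x / Real.sqrt (2 * (155 - 74 * x^2))) x := by
  have h := (Real.hasDerivAt_sqrt (ne_of_gt hx)).comp x (inner_deriv x)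
  refine h.congr_deriv (Eq.symm ?_)
  field_simp
  ring

private lemma phi_deriv (x : ℝ) (hx : 0 < 2 * (155 - 74 * x^2)) :
    HasDerivAt (fun ρ : ℝ => 3 * ρ / Real.sqrt (2 * (155 - 74 * ρ^2)))
      (930 / (Real.sqrt (2 * (155 - 74 * x^2)))^3) x := by
  have hs : 0 < Real.sqrt (2 * (155 - 74 * x^2)) := Real.sqrt_pos.2 hx
  have hnum : HasDerivAt (fun ρ : ℝ => 3 * ρ) 3 x := by
    simpa using (hasDerivAt_id x).const_mul 3
  have h := hnum.div (sqrt_deriv x hx) (ne_of_gt hs)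
  refine h.congr_deriv (Eq.symm ?_)
  have hsq : Real.sqrt (2 * (155 - 74 * x^2)) ^ 2 = 2 * (155 - 74 * x^2) :=
    Real.sq_sqrt hx.le
  set s := Real.sqrt (2 * (155 - 74 * x^2)) with hsdef
  field_simp
  ring_nf
  rw [hsq]
  ring

private lemma phi_deriv2 (x : ℝ) (hx : 0 < 2 * (155 - 74 * x^2)) :
    HasDerivAt (fun ρ : ℝ => 930 / (Real.sqrt (2 * (155 - 74 * ρ^2)))^3)
      (412920 * x / (Real.sqrt (2 * (155 - 74 * x^2)))^5) x := by
  have hs : 0 < Real.sqrt (2 * (155 - 74 * x^2)) := Real.sqrt_pos.2 hx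
  have hden : HasDerivAt (fun ρ : ℝ => (Real.sqrt (2 * (155 - 74 * ρ^2)))^3)
      (3 * (Real.sqrt (2 * (155 - 74 * x^2)))^2 * (-148 * x / Real.sqrt (2 * (155 - 74 * x^2)))) x := by
    have := (sqrt_deriv x hx).pow 3
    refine this.congr_deriv (Eq.symm ?_)
    norm_num
  have h := (hasDerivAt_const x (930:ℝ)).div hden (by positivity)
  refine h.congr_deriv (Eq.symm ?_)
  have hsq : Real.sqrt (2 * (155 - 74 * x^2)) ^ 2 = 2 * (155 - 74 * x^2) :=
    Real.sq_sqrt hx.le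
  set s := Real.sqrt (2 * (155 - 74 * x^2)) with hsdef
  field_simp
  ring_nf

theorem stmt_3 (φ₀ : ℝ → ℝ)
    (hφ : φ₀ = fun ρ => 3 * ρ / Real.sqrt (2 * (155 - 74 * ρ^2))) :
    ∀ ρ ∈ Set.Ioo (0:ℝ) 1,
      (1 - ρ^2) * deriv (deriv φ₀) ρ + (8/ρ - 2*ρ) * deriv φ₀ ρ
        - 8 * (φ₀ ρ + 14 * (φ₀ ρ)^3 - 111 * (φ₀ ρ)^5) / ρ^2 = 0 := by
  intro ρ hρ
  obtain ⟨h0, h1⟩ := hρ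
  have hA : 0 < 2 * (155 - 74 * ρ^2) := by nlinarith
  -- first derivative formula on the open set where A > 0
  have hU : IsOpen {x : ℝ | 0 < 2 * (155 - 74 * x^2)} := by
    have : Continuous fun x : ℝ => 2 * (155 - 74 * x^2) := by continuity
    exact isOpen_lt continuous_const this
  have hEq : deriv φ₀ =ᶠ[nhds ρ] fun x => 930 / (Real.sqrt (2 * (155 - 74 * x^2)))^3 := by
    filter_upwards [hU.mem_nhds hA] with x hx
    rw [hφ]
    exact (phi_deriv x hx).deriv
  have hd1 : deriv φ₀ ρ = 930 / (Real.sqrt (2 * (155 - 74 * ρ^2)))^3 := hEq.self_of_nhds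
  have hd2 : deriv (deriv φ₀) ρ = 412920 * ρ / (Real.sqrt (2 * (155 - 74 * ρ^2)))^5 := by
    rw [hEq.deriv_eq]
    exact (phi_deriv2 ρ hA).deriv
  have hs : 0 < Real.sqrt (2 * (155 - 74 * ρ^2)) := Real.sqrt_pos.2 hA
  have hsq : Real.sqrt (2 * (155 - 74 * ρ^2)) ^ 2 = 2 * (155 - 74 * ρ^2) :=
    Real.sq_sqrt hA.le
  rw [hd2, hd1, hφ]
  beta_reduce
  set s := Real.sqrt (2 * (155 - 74 * ρ^2)) with hsdef
  clear hsdef hd1 hd2 hEq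
  have h3 : s^3 = (2 * (155 - 74 * ρ^2)) * s := by
    have : s^3 = s^2 * s := by ring
    rw [this, hsq]
  have h5 : s^5 = (2 * (155 - 74 * ρ^2))^2 * s := by
    have : s^5 = (s^2)^2 * s := by ring
    rw [this, hsq]
  rw [h3, h5]
  have hA' : (2 * (155 - 74 * ρ^2)) ≠ 0 := ne_of_gt hA
  clear_value s
  field_simp
  have h4 : s^4 = (2*(155-74*ρ^2))^2 := by rw [show s^4 = (s^2)^2 by ring, hsq]
  have hB : (155 - ρ^2*74) ≠ 0 := by nlinarith
  rw [h4, hsq, sub_eq_iff_eq_add, div_eq_iff (pow_ne_zero 2 hB)]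
  ring
end

section
/- The pair g(ρ) = (φ₀'(ρ), ρφ₀''(ρ) + 2φ₀'(ρ)), with φ₀(ρ) = 3ρ/√(2(155−74ρ²)), satisfies the eigenvalue system at λ = 1: g₂(ρ) = ρg₁'(ρ) + 2g₁(ρ), and (1−ρ²)g₁''(ρ) + (10/ρ − 6ρ)g₁'(ρ) − (6 + (8/ρ²)n'(φ₀(ρ)))g₁(ρ) = 0 for ρ ∈ (0,1), where n(x) = 14x³ − 111x⁵. -/
noncomputable def sw (ρ : ℝ) : ℝ := Real.sqrt (310 - 148*ρ^2)

lemma sw_pos {ρ : ℝ} (hs : (0:ℝ) < 310 - 148*ρ^2) : 0 < sw ρ := Real.sqrt_pos.mpr hs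

lemma sw_sq {ρ : ℝ} (hs : (0:ℝ) < 310 - 148*ρ^2) : sw ρ ^ 2 = 310 - 148*ρ^2 :=
  Real.sq_sqrt hs.le

lemma sw_hasDeriv {ρ : ℝ} (hs : (0:ℝ) < 310 - 148*ρ^2) :
    HasDerivAt sw (-(148*ρ) / sw ρ) ρ := by
  have hinner : HasDerivAt (fun x : ℝ => 310 - 148*x^2) (-(296*ρ)) ρ := by
    have := ((hasDerivAt_pow 2 ρ).const_mul (148:ℝ)).const_sub 310
    simpa using this.congr_deriv (by ring)
  have h := (Real.hasDerivAt_sqrt hs.ne').comp ρ hinner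
  have hw := sw_pos hs
  refine h.congr_deriv ?_
  unfold sw; field_simp; ring_nf

noncomputable def F1 (ρ : ℝ) : ℝ := 930 / ((310 - 148*ρ^2) * sw ρ)
noncomputable def F2 (ρ : ℝ) : ℝ := 412920 * ρ / ((310 - 148*ρ^2)^2 * sw ρ)
noncomputable def F3 (ρ : ℝ) : ℝ := 412920 * (310 + 592*ρ^2) / ((310 - 148*ρ^2)^3 * sw ρ)

lemma phi_hasDeriv {ρ : ℝ} (hs : (0:ℝ) < 310 - 148*ρ^2) :
    HasDerivAt (fun x => 3*x / sw x) (F1 ρ) ρ := by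
  have hw := sw_pos hs
  have h := ((hasDerivAt_id ρ).const_mul (3:ℝ)).div (sw_hasDeriv hs) hw.ne'
  refine h.congr_deriv ?_
  rw [F1]; simp only [id]
  field_simp
  rw [sw_sq hs, eq_div_iff (by nlinarith)]; ring

lemma F1_hasDeriv {ρ : ℝ} (hs : (0:ℝ) < 310 - 148*ρ^2) :
    HasDerivAt F1 (F2 ρ) ρ := by
  have hw := sw_pos hs
  have hd : HasDerivAt (fun x => (310 - 148*x^2) * sw x)
      ((-(296*ρ)) * sw ρ + (310 - 148*ρ^2) * (-(148*ρ) / sw ρ)) ρ := by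
    have hinner : HasDerivAt (fun x : ℝ => 310 - 148*x^2) (-(296*ρ)) ρ := by
      have := ((hasDerivAt_pow 2 ρ).const_mul (148:ℝ)).const_sub 310
      simpa using this.congr_deriv (by ring)
    exact hinner.mul (sw_hasDeriv hs)
  have hne : (310 - 148*ρ^2) * sw ρ ≠ 0 := by positivity
  have h := (hasDerivAt_const ρ (930:ℝ)).div hd hne
  have : F1 = fun x => 930 / ((310 - 148*x^2) * sw x) := rfl
  rw [this]
  refine h.congr_deriv ?_
  rw [F2]
  field_simp
  linear_combination (-137640*ρ) * sw_sq hs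

lemma F2_hasDeriv {ρ : ℝ} (hs : (0:ℝ) < 310 - 148*ρ^2) :
    HasDerivAt F2 (F3 ρ) ρ := by
  have hw := sw_pos hs
  have hinner : HasDerivAt (fun x : ℝ => (310 - 148*x^2)^2) ((-(296*ρ)) * (2*(310-148*ρ^2))) ρ := by
    have h0 : HasDerivAt (fun x : ℝ => 310 - 148*x^2) (-(296*ρ)) ρ := by
      have := ((hasDerivAt_pow 2 ρ).const_mul (148:ℝ)).const_sub 310
      simpa using this.congr_deriv (by ring)
    have := h0.pow 2
    exact this.congr_deriv (by norm_num; ring)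
  have hd : HasDerivAt (fun x => (310 - 148*x^2)^2 * sw x)
      ((-(296*ρ)) * (2*(310-148*ρ^2)) * sw ρ + (310 - 148*ρ^2)^2 * (-(148*ρ) / sw ρ)) ρ :=
    hinner.mul (sw_hasDeriv hs)
  have hne : (310 - 148*ρ^2)^2 * sw ρ ≠ 0 := by positivity
  have h := ((hasDerivAt_id ρ).const_mul (412920:ℝ)).div hd hne
  have : F2 = fun x => 412920 * x / ((310 - 148*x^2)^2 * sw x) := rfl
  rw [this]
  refine h.congr_deriv ?_
  rw [F3]; simp only [id]
  field_simp
  linear_combination (-148*ρ^2) * sw_sq hs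

theorem stmt_11 (φ₀ g₁ g₂ : ℝ → ℝ)
    (hφ : φ₀ = fun ρ => 3 * ρ / Real.sqrt (2 * (155 - 74 * ρ^2)))
    (hg₁ : g₁ = deriv φ₀)
    (hg₂ : g₂ = fun ρ => ρ * deriv (deriv φ₀) ρ + 2 * deriv φ₀ ρ) :
    ∀ ρ ∈ Set.Ioo (0:ℝ) 1,
      g₂ ρ = ρ * deriv g₁ ρ + 2 * g₁ ρ ∧
      (1 - ρ^2) * deriv (deriv g₁) ρ + (10/ρ - 6*ρ) * deriv g₁ ρ
        - (6 + (8/ρ^2) * (42*(φ₀ ρ)^2 - 555*(φ₀ ρ)^4)) * g₁ ρ = 0 := by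
  have hφw : φ₀ = fun x => 3*x / sw x := by
    rw [hφ]; funext x; rw [sw]
    congr 2
    ring
  set S : Set ℝ := {x : ℝ | 0 < 310 - 148*x^2} with hS
  have hSopen : IsOpen S := isOpen_lt continuous_const (by continuity)
  have hg1S : ∀ x ∈ S, g₁ x = F1 x := by
    intro x hx
    rw [hg₁, hφw]
    exact (phi_hasDeriv hx).deriv
  have hdg1S : ∀ x ∈ S, deriv g₁ x = F2 x := by
    intro x hx
    have hev : g₁ =ᶠ[nhds x] F1 := Filter.eventuallyEq_of_mem (hSopen.mem_nhds hx) hg1S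
    rw [hev.deriv_eq]
    exact (F1_hasDeriv hx).deriv
  intro ρ hρ
  obtain ⟨hρ0, hρ1⟩ := hρ
  have hs : (0:ℝ) < 310 - 148*ρ^2 := by nlinarith
  have hmem : S ∈ nhds ρ := hSopen.mem_nhds hs
  have hd1 : deriv g₁ ρ = F2 ρ := hdg1S ρ hs
  have hd2 : deriv (deriv g₁) ρ = F3 ρ := by
    have hev : deriv g₁ =ᶠ[nhds ρ] F2 := Filter.eventuallyEq_of_mem hmem hdg1S
    rw [hev.deriv_eq]
    exact (F2_hasDeriv hs).deriv
  constructor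
  · subst hg₁ hg₂; rfl
  · have hw := sw_pos hs
    have hφ2 : (φ₀ ρ)^2 = 9*ρ^2/(310 - 148*ρ^2) := by
      rw [hφw]
      rw [div_pow, div_eq_div_iff (by positivity) hs.ne']
      linear_combination (-9*ρ^2) * sw_sq hs
    have hφ4 : (φ₀ ρ)^4 = 81*ρ^4/(310 - 148*ρ^2)^2 := by
      have : (φ₀ ρ)^4 = ((φ₀ ρ)^2)^2 := by ring
      rw [this, hφ2]; rw [div_pow]; congr 1; ring
    rw [hd1, hd2, hg1S ρ hs, hφ2, hφ4, F1, F2, F3]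
    field_simp
    have : (310 - ρ ^ 2 * 148) ≠ 0 := by nlinarith
    field_simp
    ring
end
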